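/- Minimization form of QFI loss: F(ρ_θ) − F(𝒩(ρ_θ)) = min over all self-adjoint operators Q on the output space of ∑_j ‖(Q E_j − E_j L_θ)√ρ_θ‖²_HS, and the minimum is attained at Q = 𝓛_θ. -/

import Mathlib

open Matrix
open scoped ComplexOrder

/-- The positive semidefinite square root of a positive semidefinite matrix
(definition of `Matrix.PosSemidef.sqrt` from the older Mathlib, since removed). -/
noncomputable def Matrix.PosSemidef.sqrt {n : Type*} [Fintype n] [DecidableEq n]
    {𝕜 : Type*} [RCLike 𝕜] {A : Matrix n n 𝕜} (hA : A.PosSemidef) : Matrix n n 𝕜 :=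
  hA.1.eigenvectorUnitary.1 * diagonal ((↑) ∘ (√·) ∘ hA.1.eigenvalues) *
  (star hA.1.eigenvectorUnitary : Matrix n n 𝕜)

private lemma psd_trace_re_nonneg' {n : ℕ} {M : Matrix (Fin n) (Fin n) ℂ}
    (hM : M.PosSemidef) : 0 ≤ M.trace.re := by
  have h : ∀ i, 0 ≤ M i i := fun i => hM.diag_nonneg
  have h2 : (0:ℝ) ≤ ∑ i, (M i i).re :=
    Finset.sum_nonneg fun i _ => by simpa using (Complex.le_def.mp (h i)).1
  simpa [Matrix.trace, Matrix.diag, Complex.re_sum] using h2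

/-- Minimization form of the QFI loss: `F(ρ) − F(𝒩(ρ))` is the minimum over all
Hermitian `Q` of `∑_j ‖(Q E_j − E_j L)√ρ‖²_HS`, attained at `Q = 𝓛`. -/
theorem qfi_loss_min
    {n : ℕ} {ι : Type*} [Fintype ι]
    (ρ L 𝓛 : Matrix (Fin n) (Fin n) ℂ) (hρ : ρ.PosSemidef)
    (hρtr : ρ.trace = 1) (hL : L.IsHermitian) (h𝓛 : 𝓛.IsHermitian)
    (E : ι → Matrix (Fin n) (Fin n) ℂ)
    (hKraus : ∑ j, (E j)ᴴ * E j = 1)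
    (hSLDout : ∑ j, E j * (L * ρ + ρ * L) * (E j)ᴴ
      = 𝓛 * (∑ j, E j * ρ * (E j)ᴴ) + (∑ j, E j * ρ * (E j)ᴴ) * 𝓛) :
    IsLeast
      {x : ℝ | ∃ Q : Matrix (Fin n) (Fin n) ℂ, Q.IsHermitian ∧
        x = (∑ j, (((Q * E j - E j * L) * hρ.sqrt)ᴴ
              * ((Q * E j - E j * L) * hρ.sqrt)).trace).re}
      ((ρ * L ^ 2).trace.re - ((∑ j, E j * ρ * (E j)ᴴ) * 𝓛 ^ 2).trace.re)
    ∧ (∑ j, (((𝓛 * E j - E j * L) * hρ.sqrt)ᴴ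
          * ((𝓛 * E j - E j * L) * hρ.sqrt)).trace).re
        = (ρ * L ^ 2).trace.re - ((∑ j, E j * ρ * (E j)ᴴ) * 𝓛 ^ 2).trace.re := by
  set σ : Matrix (Fin n) (Fin n) ℂ := ∑ j, E j * ρ * (E j)ᴴ with hσ
  set S : Matrix (Fin n) (Fin n) ℂ := hρ.sqrt with hSdef
  have hS : Sᴴ = S := by
    simp only [hSdef, Matrix.PosSemidef.sqrt, conjTranspose_mul, diagonal_conjTranspose,
      star_eq_conjTranspose, conjTranspose_conjTranspose, Matrix.mul_assoc]
    congr 2; ext i j; simp [diagonal_apply]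
  have hSS : S * S = ρ := by
    conv_rhs => rw [hρ.1.spectral_theorem]
    have hU := Unitary.coe_star_mul_self hρ.1.eigenvectorUnitary
    simp only [hSdef, Matrix.PosSemidef.sqrt, Matrix.mul_assoc, Unitary.conjStarAlgAut_apply]
    rw [← Matrix.mul_assoc (star (hρ.1.eigenvectorUnitary : Matrix (Fin n) (Fin n) ℂ)), hU,
      Matrix.one_mul, ← Matrix.mul_assoc (diagonal _), diagonal_mul_diagonal]
    congr 3; ext i
    simp only [Function.comp_apply]
    rw [← RCLike.ofReal_mul, Real.mul_self_sqrt (hρ.eigenvalues_nonneg i)]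
  clear_value S
  -- the key identity
  have key : ∀ Q : Matrix (Fin n) (Fin n) ℂ, Q.IsHermitian →
      (∑ j, (((Q * E j - E j * L) * S)ᴴ * ((Q * E j - E j * L) * S)).trace)
        = (ρ * L ^ 2).trace - (σ * 𝓛 ^ 2).trace + ((Q - 𝓛) * σ * (Q - 𝓛)).trace := by
    intro Q hQ
    have step1 : ∀ j, (((Q * E j - E j * L) * S)ᴴ * ((Q * E j - E j * L) * S)).trace
        = (Q * (Q * (E j * ρ * (E j)ᴴ))).trace
          - (Q * (E j * (L * ρ + ρ * L) * (E j)ᴴ)).trace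
          + (((E j)ᴴ * E j) * (L * ρ * L)).trace := by
      intro j
      set A : Matrix (Fin n) (Fin n) ℂ := Q * E j - E j * L with hA
      have hAH : Aᴴ = (E j)ᴴ * Q - L * (E j)ᴴ := by
        rw [hA, conjTranspose_sub, conjTranspose_mul, conjTranspose_mul, hQ.eq, hL.eq]
      have e1 : ((A * S)ᴴ * (A * S)).trace = (A * ρ * Aᴴ).trace := by
        rw [conjTranspose_mul, hS, Matrix.trace_mul_comm]
        congr 1
        rw [← hSS]; noncomm_ring
      have expand : A * ρ * Aᴴ
          = (Q * (E j * ρ * (E j)ᴴ)) * Q - Q * (E j * (ρ * L) * (E j)ᴴ)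
            - (E j * (L * ρ) * (E j)ᴴ) * Q + E j * (L * ρ * L) * (E j)ᴴ := by
        rw [hA, hAH]; noncomm_ring
      have h1 : ((Q * (E j * ρ * (E j)ᴴ)) * Q).trace
          = (Q * (Q * (E j * ρ * (E j)ᴴ))).trace := Matrix.trace_mul_comm _ _
      have h2 : ((E j * (L * ρ) * (E j)ᴴ) * Q).trace
          = (Q * (E j * (L * ρ) * (E j)ᴴ)).trace := Matrix.trace_mul_comm _ _
      have h3 : (E j * (L * ρ * L) * (E j)ᴴ).trace
          = (((E j)ᴴ * E j) * (L * ρ * L)).trace := by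
        rw [Matrix.trace_mul_comm]
        congr 1; noncomm_ring
      have h4 : Q * (E j * (L * ρ + ρ * L) * (E j)ᴴ)
          = Q * (E j * (L * ρ) * (E j)ᴴ) + Q * (E j * (ρ * L) * (E j)ᴴ) := by
        noncomm_ring
      rw [e1, expand, Matrix.trace_add, Matrix.trace_sub, Matrix.trace_sub,
        h1, h2, h3, h4, Matrix.trace_add]
      ring
    rw [Finset.sum_congr rfl (fun j _ => step1 j)]
    rw [Finset.sum_add_distrib, Finset.sum_sub_distrib]
    have s1 : ∑ j, (Q * (Q * (E j * ρ * (E j)ᴴ))).trace = (Q * (Q * σ)).trace := by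
      have : Q * (Q * σ) = ∑ j, Q * (Q * (E j * ρ * (E j)ᴴ)) := by
        rw [hσ, Finset.mul_sum, Finset.mul_sum]
      rw [this, Matrix.trace_sum]
    have s2 : ∑ j, (Q * (E j * (L * ρ + ρ * L) * (E j)ᴴ)).trace
        = (Q * (𝓛 * σ + σ * 𝓛)).trace := by
      have : Q * (𝓛 * σ + σ * 𝓛) = ∑ j, Q * (E j * (L * ρ + ρ * L) * (E j)ᴴ) := by
        rw [← hSLDout, Finset.mul_sum]
      rw [this, Matrix.trace_sum]
    have s3 : ∑ j, (((E j)ᴴ * E j) * (L * ρ * L)).trace = (ρ * L ^ 2).trace := by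
      have e : (1 : Matrix (Fin n) (Fin n) ℂ) * (L * ρ * L)
          = ∑ j, ((E j)ᴴ * E j) * (L * ρ * L) := by
        rw [← hKraus, Finset.sum_mul]
      rw [← Matrix.trace_sum, ← e, one_mul]
      conv_rhs => rw [pow_two, ← mul_assoc, Matrix.trace_mul_comm]
      congr 1; noncomm_ring
    rw [s1, s2, s3]
    -- expand the RHS correction term
    have exp2 : (Q - 𝓛) * σ * (Q - 𝓛)
        = (Q * σ) * Q - Q * (σ * 𝓛) - (𝓛 * σ) * Q + 𝓛 * σ * 𝓛 := by
      noncomm_ring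
    have g1 : ((Q * σ) * Q).trace = (Q * (Q * σ)).trace := Matrix.trace_mul_comm _ _
    have g2 : ((𝓛 * σ) * Q).trace = (Q * (𝓛 * σ)).trace := Matrix.trace_mul_comm _ _
    have g3 : (𝓛 * σ * 𝓛).trace = (σ * 𝓛 ^ 2).trace := by
      conv_rhs => rw [pow_two, ← mul_assoc, Matrix.trace_mul_comm]
      congr 1; noncomm_ring
    have g4 : Q * (𝓛 * σ + σ * 𝓛) = Q * (𝓛 * σ) + Q * (σ * 𝓛) := by noncomm_ring
    rw [exp2, Matrix.trace_add, Matrix.trace_sub, Matrix.trace_sub,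
      g1, g2, g3, g4, Matrix.trace_add]
    ring
  -- σ is positive semidefinite
  have hσpsd : σ.PosSemidef := by
    rw [hσ]
    exact Finset.sum_induction _ Matrix.PosSemidef (fun a b ha hb => ha.add hb)
      Matrix.PosSemidef.zero (fun j _ => hρ.mul_mul_conjTranspose_same (E j))
  have hpsd : ∀ Q : Matrix (Fin n) (Fin n) ℂ, Q.IsHermitian →
      ((Q - 𝓛) * σ * (Q - 𝓛)).PosSemidef := by
    intro Q hQ
    have := hσpsd.conjTranspose_mul_mul_same (Q - 𝓛)
    rwa [(hQ.sub h𝓛).eq] at this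
  have attain : (∑ j, (((𝓛 * E j - E j * L) * S)ᴴ * ((𝓛 * E j - E j * L) * S)).trace).re
      = (ρ * L ^ 2).trace.re - (σ * 𝓛 ^ 2).trace.re := by
    rw [key 𝓛 h𝓛]
    simp [Complex.add_re, Complex.sub_re]
  refine ⟨⟨⟨𝓛, h𝓛, attain.symm⟩, ?_⟩, attain⟩
  rintro x ⟨Q, hQ, hx⟩
  rw [hx, key Q hQ]
  have := psd_trace_re_nonneg' (hpsd Q hQ)
  rw [Complex.add_re, Complex.sub_re]
  linarith
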